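/- Let k ≥ 1 be an integer and let f : ℕ → ℂ satisfy f(m) ≠ 0 for all m ≥ 1, with a constant C > 0 such that |f(m)^{-k}| ≤ C for all m ≥ 1. Then for every complex z with |z| < 1/3, both of the following series converge absolutely and ∑_{n≥1} z^n / f(n)^k = ∑_{j≥1} (∑_{m=1}^{j} C(j,m) (-1)^{j-m} / f(m)^k) · z^j / (1-z)^{j+1}, where C(j,m) denotes the binomial coefficient. -/

import Mathlib

/-- Geometric series case of the generalized zeta series transformation. -/
theorem stmt_0 (k : ℕ) (hk : 1 ≤ k) (f : ℕ → ℂ)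
    (hf : ∀ m : ℕ, 1 ≤ m → f m ≠ 0) (C : ℝ) (hC : 0 < C)
    (hbound : ∀ m : ℕ, 1 ≤ m → ‖(f m ^ k)⁻¹‖ ≤ C)
    (z : ℂ) (hz : ‖z‖ < 1 / 3) :
    Summable (fun n : ℕ => z ^ (n + 1) / f (n + 1) ^ k) ∧
    Summable (fun j : ℕ =>
      (∑ m ∈ Finset.Icc 1 (j + 1),
        ((j + 1).choose m : ℂ) * (-1) ^ (j + 1 - m) / f m ^ k) *
        z ^ (j + 1) / (1 - z) ^ (j + 2)) ∧
    (∑' n : ℕ, z ^ (n + 1) / f (n + 1) ^ k) =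
      ∑' j : ℕ,
        (∑ m ∈ Finset.Icc 1 (j + 1),
          ((j + 1).choose m : ℂ) * (-1) ^ (j + 1 - m) / f m ^ k) *
          z ^ (j + 1) / (1 - z) ^ (j + 2) := by
  have hz1 : ‖z‖ < 1 := by linarith
  have h1z : (1 : ℂ) - z ≠ 0 := by
    intro h
    have hz2 : z = 1 := by linear_combination -h
    rw [hz2] at hz; norm_num at hz
  have hn1z : (2 : ℝ) / 3 < ‖(1 : ℂ) - z‖ := by
    have h := norm_sub_norm_le (1 : ℂ) z
    rw [norm_one] at h
    linarith
  set w : ℂ := z / (1 - z) with hw_def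
  have hw : ‖w‖ < 1 / 2 := by
    rw [hw_def, norm_div, div_lt_iff₀ (by linarith)]
    linarith
  have hw1 : ‖w‖ < 1 := by linarith
  have hwz : w * (1 - z) = z := div_mul_cancel₀ z h1z
  have h1w : (1 : ℂ) - (-w) = (1 - z)⁻¹ := by
    rw [hw_def]
    field_simp
    ring
  have hterm : ∀ j : ℕ, z ^ (j + 1) / (1 - z) ^ (j + 2) = w ^ (j + 1) * (1 - z)⁻¹ := by
    intro j
    rw [hw_def, div_pow, pow_succ (1 - z) (j + 1), ← div_div, div_eq_mul_inv]
  -- first summability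
  have hS1 : Summable (fun n : ℕ => z ^ (n + 1) / f (n + 1) ^ k) := by
    apply Summable.of_norm_bounded
      ((summable_geometric_of_lt_one (norm_nonneg z) hz1).mul_left C)
    intro n
    rw [div_eq_mul_inv, norm_mul, norm_pow]
    calc ‖z‖ ^ (n + 1) * ‖(f (n + 1) ^ k)⁻¹‖
        ≤ ‖z‖ ^ n * C := by
          apply mul_le_mul (pow_le_pow_of_le_one (norm_nonneg z) hz1.le (by omega))
            (hbound (n + 1) (by omega)) (norm_nonneg _) (by positivity)
      _ = C * ‖z‖ ^ n := mul_comm _ _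
  -- the two-variable function
  set F : ℕ × ℕ → ℂ := fun p =>
    if p.2 ∈ Finset.Icc 1 (p.1 + 1) then
      (((p.1 + 1).choose p.2 : ℂ) * (-1) ^ (p.1 + 1 - p.2) / f p.2 ^ k) *
        w ^ (p.1 + 1) * (1 - z)⁻¹
    else 0 with hF_def
  set G : ℕ × ℕ → ℝ := fun p =>
    if p.2 ∈ Finset.Icc 1 (p.1 + 1) then
      ((p.1 + 1).choose p.2 : ℝ) * C * (‖w‖ ^ (p.1 + 1) * ‖(1 : ℂ) - z‖⁻¹)
    else 0 with hG_def
  have hG0 : ∀ p, 0 ≤ G p := by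
    intro p
    rw [hG_def]
    dsimp only
    split
    · positivity
    · exact le_rfl
  have hFG : ∀ p, ‖F p‖ ≤ G p := by
    rintro ⟨j, m⟩
    rw [hF_def, hG_def]
    dsimp only
    split
    · rename_i h
      have hm : 1 ≤ m := (Finset.mem_Icc.mp h).1
      have h1 : (‖f m‖ ^ k)⁻¹ ≤ C := by rw [← norm_pow, ← norm_inv]; exact hbound m hm
      have hnorm : ‖(((j + 1).choose m : ℂ) * (-1) ^ (j + 1 - m) / f m ^ k) *
          w ^ (j + 1) * (1 - z)⁻¹‖
          = ((j + 1).choose m : ℝ) * (‖f m‖ ^ k)⁻¹ * ‖w‖ ^ (j + 1) * ‖(1:ℂ) - z‖⁻¹ := by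
        rw [norm_mul, norm_mul, norm_div, norm_mul, norm_pow, norm_pow, norm_pow, norm_inv,
          norm_neg, norm_one, one_pow, mul_one, Complex.norm_natCast, div_eq_mul_inv]
      rw [hnorm]
      calc ((j + 1).choose m : ℝ) * (‖f m‖ ^ k)⁻¹ * ‖w‖ ^ (j + 1) * ‖(1:ℂ) - z‖⁻¹
          ≤ ((j + 1).choose m : ℝ) * C * ‖w‖ ^ (j + 1) * ‖(1:ℂ) - z‖⁻¹ := by
            gcongr
        _ = ((j + 1).choose m : ℝ) * C * (‖w‖ ^ (j + 1) * ‖(1:ℂ) - z‖⁻¹) := by ring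
    · simp
  have hGrow0 : ∀ j : ℕ, ∀ m ∉ Finset.Icc 1 (j + 1), G (j, m) = 0 := by
    intro j m hm
    rw [hG_def]
    exact if_neg hm
  have hFrow0 : ∀ j : ℕ, ∀ m ∉ Finset.Icc 1 (j + 1), F (j, m) = 0 := by
    intro j m hm
    rw [hF_def]
    exact if_neg hm
  have hGrowsum : ∀ j : ℕ, ∑' m : ℕ, G (j, m) = ∑ m ∈ Finset.Icc 1 (j + 1), G (j, m) :=
    fun j => tsum_eq_sum (hGrow0 j)
  have hGrow : ∀ j : ℕ, Summable fun m => G (j, m) :=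
    fun j => summable_of_ne_finset_zero (hGrow0 j)
  -- geometric majorant for the row sums
  have hHsum : Summable (fun j : ℕ => C * (2 * ‖w‖) ^ (j + 1) * ‖(1:ℂ) - z‖⁻¹) := by
    have h2w : 2 * ‖w‖ < 1 := by linarith
    have h2w0 : 0 ≤ 2 * ‖w‖ := by positivity
    have := ((summable_geometric_of_lt_one h2w0 h2w).mul_left
      (C * (2 * ‖w‖) * ‖(1:ℂ) - z‖⁻¹))
    apply this.congr
    intro j
    rw [pow_succ]
    ring
  have hGrowle : ∀ j : ℕ, ∑' m : ℕ, G (j, m) ≤ C * (2 * ‖w‖) ^ (j + 1) * ‖(1:ℂ) - z‖⁻¹ := by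
    intro j
    rw [hGrowsum j]
    have hle : ∑ m ∈ Finset.Icc 1 (j + 1), G (j, m)
        ≤ ∑ m ∈ Finset.Icc 1 (j + 1), ((j + 1).choose m : ℝ) * (C * (‖w‖ ^ (j + 1) * ‖(1:ℂ) - z‖⁻¹)) := by
      apply Finset.sum_le_sum
      intro m hm
      rw [hG_def]
      dsimp only
      rw [if_pos hm]
      ring_nf
      exact le_rfl
    refine hle.trans ?_
    rw [← Finset.sum_mul]
    have hchoose : ∑ m ∈ Finset.Icc 1 (j + 1), ((j + 1).choose m : ℝ) ≤ 2 ^ (j + 1) := by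
      have hsub : Finset.Icc 1 (j + 1) ⊆ Finset.range (j + 2) := by
        intro m hm
        simp only [Finset.mem_Icc] at hm
        simp only [Finset.mem_range]
        omega
      calc ∑ m ∈ Finset.Icc 1 (j + 1), ((j + 1).choose m : ℝ)
          ≤ ∑ m ∈ Finset.range (j + 2), ((j + 1).choose m : ℝ) :=
            Finset.sum_le_sum_of_subset_of_nonneg hsub (fun i _ _ => by positivity)
        _ = 2 ^ (j + 1) := by
            rw [← Nat.cast_sum]
            rw [Nat.sum_range_choose]
            push_cast
            ring
    calc (∑ m ∈ Finset.Icc 1 (j + 1), ((j + 1).choose m : ℝ)) * (C * (‖w‖ ^ (j + 1) * ‖(1:ℂ) - z‖⁻¹))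
        ≤ 2 ^ (j + 1) * (C * (‖w‖ ^ (j + 1) * ‖(1:ℂ) - z‖⁻¹)) := by
          apply mul_le_mul_of_nonneg_right hchoose (by positivity)
      _ = C * (2 * ‖w‖) ^ (j + 1) * ‖(1:ℂ) - z‖⁻¹ := by
          rw [mul_pow]
          ring
  have hGsum : Summable G := by
    rw [summable_prod_of_nonneg hG0]
    refine ⟨hGrow, ?_⟩
    exact Summable.of_nonneg_of_le (fun j => tsum_nonneg (fun m => hG0 (j, m)))
      hGrowle hHsum
  have hFnormsum : Summable (fun p => ‖F p‖) :=
    Summable.of_nonneg_of_le (fun p => norm_nonneg _) hFG hGsum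
  have hFsum : Summable F := hFnormsum.of_norm
  -- row tsum = stated term
  have hrow : ∀ j : ℕ, ∑' m : ℕ, F (j, m) =
      (∑ m ∈ Finset.Icc 1 (j + 1),
        ((j + 1).choose m : ℂ) * (-1) ^ (j + 1 - m) / f m ^ k) *
        z ^ (j + 1) / (1 - z) ^ (j + 2) := by
    intro j
    rw [tsum_eq_sum (hFrow0 j), mul_div_assoc, hterm j]
    rw [Finset.sum_mul]
    apply Finset.sum_congr rfl
    intro m hm
    rw [hF_def]
    dsimp only
    rw [if_pos hm]
    ring
  -- column tsum
  have hcol0 : ∑' j : ℕ, F (j, 0) = 0 := by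
    have : ∀ j : ℕ, F (j, 0) = 0 := by
      intro j
      apply hFrow0
      simp
    simp [this]
  have hcol : ∀ n : ℕ, ∑' j : ℕ, F (j, n + 1) = z ^ (n + 1) / f (n + 1) ^ k := by
    intro n
    have hinj : Function.Injective (fun i : ℕ => i + n) := add_left_injective n
    have hsupp : Function.support (fun j => F (j, n + 1)) ⊆ Set.range (fun i : ℕ => i + n) := by
      intro j hj
      simp only [Function.mem_support] at hj
      have hnj : n ≤ j := by
        by_contra h'
        push_neg at h'
        exact hj (hFrow0 j (n + 1) (by simp only [Finset.mem_Icc]; omega))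
      exact ⟨j - n, show j - n + n = j by omega⟩
    rw [← hinj.tsum_eq hsupp]
    have heq : ∀ i : ℕ, F (i + n, n + 1) =
        ((i + (n + 1)).choose (n + 1) : ℂ) * (-w) ^ i *
          (w ^ (n + 1) / f (n + 1) ^ k * (1 - z)⁻¹) := by
      intro i
      rw [hF_def]
      dsimp only
      rw [if_pos (by simp only [Finset.mem_Icc]; omega)]
      have h1 : i + n + 1 = i + (n + 1) := by omega
      rw [h1, Nat.add_sub_cancel]
      rw [neg_pow w i, ← mul_pow]
      have h3 : w ^ (i + (n + 1)) = w ^ i * w ^ (n + 1) := by rw [pow_add]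
      rw [h3]
      have hne : ((-1 : ℂ) * w) ^ i = (-1 : ℂ) ^ i * w ^ i := mul_pow _ _ _
      field_simp
      ring
    rw [tsum_congr heq, tsum_mul_right]
    rw [tsum_choose_mul_geometric_of_norm_lt_one (n + 1) (by rwa [norm_neg] : ‖-w‖ < 1)]
    rw [h1w]
    have hfm : f (n + 1) ^ k ≠ 0 := pow_ne_zero k (hf (n + 1) (by omega))
    have h5 : ((1 : ℂ) - z) ^ (n + 1) * w ^ (n + 1) = z ^ (n + 1) := by
      rw [← mul_pow, mul_comm, hwz]
    rw [inv_pow, one_div, inv_inv, ← h5]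
    field_simp [hfm]
    ring
  -- assemble
  have hrowsummable : ∀ j : ℕ, Summable fun m => F (j, m) :=
    fun j => summable_of_ne_finset_zero (hFrow0 j)
  have hcolsummable : ∀ m : ℕ, Summable fun j => F (j, m) :=
    fun m => hFsum.prod_symm.prod_factor m
  have hswap : ∑' (m : ℕ) (j : ℕ), F (j, m) = ∑' (j : ℕ) (m : ℕ), F (j, m) :=
    Summable.tsum_comm' hFsum hrowsummable hcolsummable
  -- second summability
  have hS2 : Summable (fun j : ℕ =>
      (∑ m ∈ Finset.Icc 1 (j + 1),
        ((j + 1).choose m : ℂ) * (-1) ^ (j + 1 - m) / f m ^ k) *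
        z ^ (j + 1) / (1 - z) ^ (j + 2)) := by
    apply Summable.of_norm_bounded hHsum
    intro j
    rw [← hrow j, tsum_eq_sum (hFrow0 j)]
    calc ‖∑ m ∈ Finset.Icc 1 (j + 1), F (j, m)‖
        ≤ ∑ m ∈ Finset.Icc 1 (j + 1), ‖F (j, m)‖ := norm_sum_le _ _
      _ ≤ ∑ m ∈ Finset.Icc 1 (j + 1), G (j, m) :=
          Finset.sum_le_sum (fun m _ => hFG (j, m))
      _ = ∑' m : ℕ, G (j, m) := (hGrowsum j).symm
      _ ≤ C * (2 * ‖w‖) ^ (j + 1) * ‖(1:ℂ) - z‖⁻¹ := hGrowle j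
  refine ⟨hS1, hS2, ?_⟩
  -- final equality
  have hshift : ∑' n : ℕ, (∑' j : ℕ, F (j, n + 1)) = ∑' m : ℕ, ∑' j : ℕ, F (j, m) := by
    have hinj : Function.Injective (fun n : ℕ => n + 1) := add_left_injective 1
    have hsupp : Function.support (fun m => ∑' j : ℕ, F (j, m)) ⊆
        Set.range (fun n : ℕ => n + 1) := by
      intro m hm
      simp only [Function.mem_support] at hm
      rcases m with _ | n
      · exact absurd hcol0 hm
      · exact ⟨n, rfl⟩
    exact hinj.tsum_eq hsupp
  calc ∑' n : ℕ, z ^ (n + 1) / f (n + 1) ^ k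
      = ∑' n : ℕ, (∑' j : ℕ, F (j, n + 1)) := tsum_congr (fun n => (hcol n).symm)
    _ = ∑' m : ℕ, ∑' j : ℕ, F (j, m) := hshift
    _ = ∑' j : ℕ, ∑' m : ℕ, F (j, m) := hswap
    _ = ∑' j : ℕ,
        (∑ m ∈ Finset.Icc 1 (j + 1),
          ((j + 1).choose m : ℂ) * (-1) ^ (j + 1 - m) / f m ^ k) *
          z ^ (j + 1) / (1 - z) ^ (j + 2) := tsum_congr hrow
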